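/- arXiv:1912.06781 — 6 statements merged into one kernel-verified Lean document; each statement's English description precedes it below -/
import Mathlib

section
/- Let p be a prime, u, m, n natural numbers with p ∤ u, m ≥ 2 if p = 2, and set k = 1 + u·p^m. Then the map Ξ : ℤ/p^nℤ → ℤ/p^nℤ sending the class of a non-negative integer i to the class of S(k,i) is a well-defined bijection. -/
/-- `S x i = 1 + x + ⋯ + x^(i-1)`, with `S x 0 = 0`. -/
def S (x i : ℕ) : ℕ := ∑ t ∈ Finset.range i, x ^ t

lemma S_succ (x i : ℕ) : S x (i + 1) = S x i + x ^ i := Finset.sum_range_succ _ _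

lemma S_add (x i d : ℕ) : S x (i + d) = S x i + x ^ i * S x d := by
  rw [S, S, S, Finset.sum_range_add, Finset.mul_sum]
  congr 1
  exact Finset.sum_congr rfl fun t _ => pow_add x i t

lemma S_pos (x : ℕ) {d : ℕ} (hd : d ≠ 0) : 0 < S x d := by
  have : (0 : ℕ) ∈ Finset.range d := Finset.mem_range.mpr (Nat.pos_of_ne_zero hd)
  calc 0 < x ^ 0 := by simp
    _ ≤ S x d := Finset.single_le_sum (fun t _ => Nat.zero_le _) this

lemma S_mod (q x d : ℕ) (hx : x ≡ 1 [MOD q]) : S x d ≡ d [MOD q] := by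
  induction d with
  | zero => rfl
  | succ d ih =>
    rw [S_succ]
    have : x ^ d ≡ 1 [MOD q] := by simpa using hx.pow d
    exact ih.add this

lemma S_mul_eq (x : ℕ) (hx : 1 ≤ x) (d : ℕ) : (x - 1) * S x d + 1 = x ^ d := by
  obtain ⟨y, rfl⟩ : ∃ y, x = y + 1 := ⟨x - 1, by omega⟩
  simp only [Nat.add_sub_cancel]
  induction d with
  | zero => simp [S]
  | succ d ih =>
    rw [S_succ, pow_succ]
    calc y * (S (y + 1) d + (y + 1) ^ d) + 1
        = (y * S (y + 1) d + 1) + y * (y + 1) ^ d := by ring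
      _ = (y + 1) ^ d + y * (y + 1) ^ d := by rw [ih]
      _ = (y + 1) ^ d * (y + 1) := by ring

theorem stmt_5 (p u m n : ℕ) (hp : p.Prime) (hu : ¬ p ∣ u) (hm : 0 < m)
    (hp2 : p = 2 → 2 ≤ m) (hn : 0 < n) (k : ℕ) (hk : k = 1 + u * p ^ m) :
    (∀ i j : ℕ, i ≡ j [MOD p ^ n] → S k i ≡ S k j [MOD p ^ n]) ∧
    Function.Bijective (fun z : ZMod (p ^ n) => ((S k z.val : ℕ) : ZMod (p ^ n))) := by
  haveI : Fact p.Prime := ⟨hp⟩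
  have hu0 : u ≠ 0 := fun h => hu (h ▸ dvd_zero p)
  have hupm : 0 < u * p ^ m := Nat.mul_pos (Nat.pos_of_ne_zero hu0) (pow_pos hp.pos m)
  have hk1 : 1 < k := by omega
  have hkm : k - 1 = u * p ^ m := by omega
  have hpk1 : p ∣ k - 1 := hkm ▸ Dvd.dvd.mul_left (dvd_pow_self p hm.ne') u
  have hpk : ¬ p ∣ k := by
    intro h
    have h1 : p ∣ k - (k - 1) := Nat.dvd_sub h hpk1
    rw [show k - (k - 1) = 1 by omega] at h1
    exact hp.one_lt.ne' (Nat.dvd_one.mp h1)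
  -- the padic valuation computation
  have hval : ∀ d : ℕ, d ≠ 0 → padicValNat p (S k d) = padicValNat p d := by
    intro d hd
    have hSne : S k d ≠ 0 := (S_pos k hd).ne'
    have hmul : k ^ d - 1 = (k - 1) * S k d :=
      Nat.sub_eq_of_eq_add (S_mul_eq k hk1.le d).symm
    have hk1ne : k - 1 ≠ 0 := by omega
    have hv : padicValNat p (k ^ d - 1) =
        padicValNat p (k - 1) + padicValNat p (S k d) := by
      rw [hmul]; exact padicValNat.mul hk1ne hSne
    rcases hp.eq_two_or_odd' with hp2' | hodd
    · -- p = 2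
      subst hp2'
      rcases Nat.even_or_odd d with hde | hdo
      · -- d even : use LTE for 2
        have hlte := padicValNat.pow_two_sub_pow hk1 hpk1 hpk hd hde
        rw [one_pow] at hlte
        -- compute v2 (k + 1) = 1
        have hm2 : 2 ≤ m := hp2 rfl
        have h2pow : 2 ^ m = 2 * 2 ^ (m - 1) := by
          rw [← pow_succ']
          congr 1
          omega
        have hsplit : k + 1 = 2 * (1 + u * 2 ^ (m - 1)) := by
          rw [hk, h2pow]; ring
        have hodd2 : ¬ 2 ∣ 1 + u * 2 ^ (m - 1) := by
          have h2d : 2 ∣ u * 2 ^ (m - 1) :=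
            Dvd.dvd.mul_left (dvd_pow_self 2 (by omega : m - 1 ≠ 0)) u
          omega
        have hvk1 : padicValNat 2 (k + 1) = 1 := by
          rw [hsplit, padicValNat.mul (by norm_num) (by omega),
            padicValNat.self one_lt_two, padicValNat.eq_zero_of_not_dvd hodd2]
        rw [hvk1] at hlte
        omega
      · -- d odd : both values are 0
        have hk2 : k ≡ 1 [MOD 2] := ((Nat.modEq_iff_dvd' hk1.le).mpr hpk1).symm
        have hSd : S k d % 2 = d % 2 := S_mod 2 k d hk2
        have hdodd : ¬ 2 ∣ d := by
          rw [Nat.two_dvd_ne_zero]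
          exact Nat.odd_iff.mp hdo
        have hSodd : ¬ 2 ∣ S k d := by
          have := Nat.odd_iff.mp hdo
          omega
        rw [padicValNat.eq_zero_of_not_dvd hSodd, padicValNat.eq_zero_of_not_dvd hdodd]
    · -- p odd : use LTE
      have hlte := padicValNat.pow_sub_pow hodd hk1 hpk1 hpk hd
      rw [one_pow] at hlte
      omega
  -- the key divisibility equivalence
  have hdvd : ∀ d : ℕ, (p ^ n ∣ S k d ↔ p ^ n ∣ d) := by
    intro d
    rcases eq_or_ne d 0 with rfl | hd
    · simp [S]
    · rw [padicValNat_dvd_iff_le (S_pos k hd).ne', padicValNat_dvd_iff_le hd, hval d hd]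
  -- monotone version of the equivalence
  have hA : ∀ i j : ℕ, i ≤ j → (S k i ≡ S k j [MOD p ^ n] ↔ i ≡ j [MOD p ^ n]) := by
    intro i j hij
    have hS : S k j = S k i + k ^ i * S k (j - i) := by
      conv_lhs => rw [show j = i + (j - i) by omega]
      exact S_add k i (j - i)
    have hSle : S k i ≤ S k j := by rw [hS]; omega
    rw [Nat.modEq_iff_dvd' hSle, Nat.modEq_iff_dvd' hij, hS, Nat.add_sub_cancel_left]
    constructor
    · intro h
      have hcop : Nat.Coprime (p ^ n) (k ^ i) :=
        ((Nat.Prime.coprime_iff_not_dvd hp).mpr hpk).pow _ _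
      exact (hdvd (j - i)).mp (hcop.dvd_of_dvd_mul_left h)
    · intro h
      exact Dvd.dvd.mul_left ((hdvd (j - i)).mpr h) _
  constructor
  · intro i j hij
    rcases le_total i j with h | h
    · exact (hA i j h).mpr hij
    · exact ((hA j i h).mpr hij.symm).symm
  · haveI : NeZero (p ^ n) := ⟨pow_ne_zero n hp.pos.ne'⟩
    have hinj : Function.Injective
        (fun z : ZMod (p ^ n) => ((S k z.val : ℕ) : ZMod (p ^ n))) := by
      intro z1 z2 hz
      have hz' : S k z1.val ≡ S k z2.val [MOD p ^ n] :=
        (ZMod.natCast_eq_natCast_iff _ _ _).mp hz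
      have hlt1 := ZMod.val_lt z1
      have hlt2 := ZMod.val_lt z2
      have heq : z1.val = z2.val := by
        rcases le_total z1.val z2.val with h | h
        · have := (hA _ _ h).mp hz'
          unfold Nat.ModEq at this
          rw [Nat.mod_eq_of_lt hlt1, Nat.mod_eq_of_lt hlt2] at this
          exact this
        · have := (hA _ _ h).mp hz'.symm
          unfold Nat.ModEq at this
          rw [Nat.mod_eq_of_lt hlt1, Nat.mod_eq_of_lt hlt2] at this
          exact this.symm
      exact ZMod.val_injective _ heq
    exact Finite.injective_iff_bijective.mp hinj
end

section
/- Let p be a prime, u, m natural numbers with p ∤ u, m ≥ 2 if p = 2, n ≤ 2m − ε (ε = 1 if p = 2, else 0), and k = 1 + u·p^m. Then for all ℓ, i ≥ 0, S(k^ℓ, i) ≡ i + C(i,2)·ℓ·u·p^m (mod p^n), where C(i,2) is the binomial coefficient i choose 2. -/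
lemma aux_pow_mod (p m n c : ℕ) (h : n ≤ 2 * m) :
    ∀ t, (1 + c * p ^ m) ^ t ≡ 1 + t * c * p ^ m [MOD p ^ n] := by
  intro t
  induction t with
  | zero => simpa using Nat.ModEq.refl _
  | succ t ih =>
    have h1 : (1 + c * p ^ m) ^ (t + 1) = (1 + c * p ^ m) ^ t * (1 + c * p ^ m) :=
      pow_succ _ _
    have h2 : (1 + t * c * p ^ m) * (1 + c * p ^ m)
        = 1 + (t + 1) * c * p ^ m + (t * c * c) * (p ^ m * p ^ m) := by ring
    have hd : p ^ n ∣ (t * c * c) * (p ^ m * p ^ m) := by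
      have : p ^ n ∣ p ^ m * p ^ m := by
        rw [← pow_add]
        exact pow_dvd_pow p (by omega)
      exact this.mul_left _
    have h3 : 1 + (t + 1) * c * p ^ m + (t * c * c) * (p ^ m * p ^ m)
        ≡ 1 + (t + 1) * c * p ^ m + 0 [MOD p ^ n] :=
      Nat.ModEq.add_left _ ((Nat.modEq_zero_iff_dvd).mpr hd)
    calc (1 + c * p ^ m) ^ (t + 1)
        = (1 + c * p ^ m) ^ t * (1 + c * p ^ m) := h1
      _ ≡ (1 + t * c * p ^ m) * (1 + c * p ^ m) [MOD p ^ n] := ih.mul_right _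
      _ = 1 + (t + 1) * c * p ^ m + (t * c * c) * (p ^ m * p ^ m) := h2
      _ ≡ 1 + (t + 1) * c * p ^ m + 0 [MOD p ^ n] := h3
      _ = 1 + (t + 1) * c * p ^ m := by ring

theorem stmt_8 (p u m n : ℕ) (hp : p.Prime) (hu : ¬ p ∣ u) (hm : 0 < m)
    (hp2 : p = 2 → 2 ≤ m)
    (ε : ℕ) (hε : ε = if p = 2 then 1 else 0) (hnm : n ≤ 2 * m - ε)
    (k : ℕ) (hk : k = 1 + u * p ^ m) (ℓ i : ℕ) :
    S (k ^ ℓ) i ≡ i + Nat.choose i 2 * ℓ * u * p ^ m [MOD p ^ n] := by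
  have hn2 : n ≤ 2 * m := hnm.trans (Nat.sub_le _ _)
  have key : ∀ j, k ^ j ≡ 1 + j * u * p ^ m [MOD p ^ n] := by
    intro j; rw [hk]; exact aux_pow_mod p m n u hn2 j
  induction i with
  | zero => simpa [S] using Nat.ModEq.refl _
  | succ i ih =>
    have hS : S (k ^ ℓ) (i + 1) = S (k ^ ℓ) i + (k ^ ℓ) ^ i := Finset.sum_range_succ _ _
    have h2 : (k ^ ℓ) ^ i ≡ 1 + ℓ * i * u * p ^ m [MOD p ^ n] := by
      rw [← pow_mul]; exact key (ℓ * i)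
    have hc : Nat.choose (i + 1) 2 = i + Nat.choose i 2 := by
      rw [Nat.choose_succ_succ, Nat.choose_one_right]
    have heq : i + Nat.choose i 2 * ℓ * u * p ^ m + (1 + ℓ * i * u * p ^ m)
        = (i + 1) + Nat.choose (i + 1) 2 * ℓ * u * p ^ m := by
      rw [hc]; ring
    rw [hS, ← heq]
    exact ih.add h2
end

section
/- For any group G, the normalizer of the image ρ(G) of the right regular representation in the symmetric group Perm(G) equals the holomorph Hol(G), i.e., the subgroup generated by ρ(G) together with the permutations of G induced by automorphisms of G. -/
/-- The right regular representation `ρ : G →* Perm G`, `ρ(σ)(x) = x * σ⁻¹`. -/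
def rho (G : Type*) [Group G] : G →* Equiv.Perm G where
  toFun g := Equiv.mulRight g⁻¹
  map_one' := by ext x; simp
  map_mul' g h := by ext x; simp [mul_assoc]

/-- The holomorph of `G`, the subgroup of `Perm G` generated by `ρ(G)` and the
permutations induced by automorphisms of `G`. -/
def Hol (G : Type*) [Group G] : Subgroup (Equiv.Perm G) :=
  (rho G).range ⊔ (MulAut.toPerm G).range

lemma rho_apply {G : Type*} [Group G] (g x : G) : rho G g x = x * g⁻¹ := rfl

lemma aut_conj {G : Type*} [Group G] (φ : MulAut G) (g : G) :
    MulAut.toPerm G φ * rho G g * (MulAut.toPerm G φ)⁻¹ = rho G (φ g) := by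
  ext x
  simp [rho_apply, Equiv.Perm.mul_apply, MulAut.toPerm]
  show φ (φ.symm x * g⁻¹) = x * (φ g)⁻¹
  rw [map_mul, map_inv, MulEquiv.apply_symm_apply]

theorem stmt_12 (G : Type*) [Group G] :
    Subgroup.normalizer ((rho G).range : Set (Equiv.Perm G)) = Hol G := by
  apply le_antisymm
  · intro π hπ
    rw [Subgroup.mem_normalizer_iff] at hπ
    set a := π 1 with ha
    set τ : Equiv.Perm G := rho G a * π with hτ
    have hτ1 : τ 1 = 1 := by simp [hτ, rho_apply, Equiv.Perm.mul_apply, ha]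
    have key : ∀ g : G, ∃ k : G, τ * rho G g * τ⁻¹ = rho G k := by
      intro g
      obtain ⟨k, hk⟩ := (hπ (rho G g)).1 ⟨g, rfl⟩
      refine ⟨a * k * a⁻¹, ?_⟩
      rw [map_mul, map_mul, map_inv, hk, hτ]
      group
    have hmul : ∀ y h : G, τ (y * h) = τ y * τ h := by
      intro y h
      obtain ⟨k, hk⟩ := key h⁻¹
      have h1 : ∀ x : G, τ (τ⁻¹ x * h) = x * k⁻¹ := by
        intro x
        have := congrArg (fun f : Equiv.Perm G => f x) hk
        simp only [Equiv.Perm.mul_apply, rho_apply, inv_inv] at this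
        exact this
      have hinv1 : τ⁻¹ (1 : G) = 1 := by
        conv_lhs => rw [← hτ1]
        exact τ.symm_apply_apply 1
      have h2 := h1 (τ y)
      have h3 := h1 1
      rw [show τ⁻¹ (τ y) = y from τ.symm_apply_apply y] at h2
      rw [hinv1, one_mul] at h3
      rw [h2, h3, one_mul]
    set e : G ≃* G := { τ with map_mul' := hmul } with he
    have hπeq : π = rho G a⁻¹ * MulAut.toPerm G e := by
      rw [map_inv]
      have : (MulAut.toPerm G e : Equiv.Perm G) = τ := rfl
      rw [this, hτ]
      group
    rw [hπeq]
    exact Subgroup.mul_mem _ (Subgroup.mem_sup_left ⟨a⁻¹, rfl⟩)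
      (Subgroup.mem_sup_right ⟨e, rfl⟩)
  · rw [Hol]
    apply sup_le Subgroup.le_normalizer
    rintro _ ⟨φ, rfl⟩
    rw [Subgroup.mem_normalizer_iff]
    rintro h
    constructor
    · rintro ⟨g, rfl⟩
      exact ⟨φ g, (aut_conj φ g).symm⟩
    · rintro ⟨k, hk⟩
      refine ⟨φ⁻¹ k, ?_⟩
      have h2 := aut_conj φ⁻¹ k
      rw [hk, map_inv] at h2
      rw [← h2]
      group
end

section
/- Let G = A ⋊ ⟨τ⟩ where ⟨τ⟩ is cyclic of order p^n for a prime p, conjugation by τ on A is the automorphism ψ, and ψ has order dividing p^m with m ≤ n (and m ≥ 2 if p = 2). Set k = 1 + u·p^m with p ∤ u, and define π : G → G by π(a·τ^i) = a·τ^{S(k,i)} for a ∈ A and i ≥ 0. Then for every b ∈ A, π commutes with ρ(b) in Perm(G), where ρ is the right regular representation. -/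
/-- The map `π` on `G = A ⋊ C_{N}` sending `a·τ^i` to `a·τ^{S(k,i)}`, where
`τ` is the canonical generator of the cyclic factor. -/
def piMap (A : Type*) [Group A] (N : ℕ)
    (φ : Multiplicative (ZMod N) →* MulAut A) (k : ℕ) :
    (A ⋊[φ] Multiplicative (ZMod N)) → (A ⋊[φ] Multiplicative (ZMod N)) :=
  fun g => ⟨g.left, Multiplicative.ofAdd ((S k (Multiplicative.toAdd g.right).val : ℕ) : ZMod N)⟩

lemma S_modEq (k i q : ℕ) (hk : k ≡ 1 [MOD q]) : S k i ≡ i [MOD q] := by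
  induction i with
  | zero => rfl
  | succ i ih =>
      have : S k (i + 1) = S k i + k ^ i := Finset.sum_range_succ _ _
      rw [this]
      have hpow : k ^ i ≡ 1 [MOD q] := by
        simpa using hk.pow i
      simpa using ih.add hpow

lemma phi_ofAdd {N : ℕ} {A : Type*} [Group A]
    (φ : Multiplicative (ZMod N) →* MulAut A) (c : ZMod N) [NeZero N] :
    φ (Multiplicative.ofAdd c) = (φ (Multiplicative.ofAdd 1)) ^ c.val := by
  rw [← map_pow]
  congr 1
  have : (Multiplicative.ofAdd (1 : ZMod N)) ^ c.val
      = Multiplicative.ofAdd ((c.val : ZMod N) * 1) := by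
    rw [← ofAdd_nsmul]
    simp [nsmul_eq_mul]
  rw [this]
  simp [ZMod.natCast_val, ZMod.cast_id]

theorem stmt_15 (p u m n : ℕ) (hp : p.Prime) (hu : ¬ p ∣ u) (hm : 0 < m)
    (hp2 : p = 2 → 2 ≤ m) (hmn : m ≤ n) (hn : 0 < n)
    (k : ℕ) (hk : k = 1 + u * p ^ m)
    (A : Type*) [Group A] (φ : Multiplicative (ZMod (p ^ n)) →* MulAut A)
    (hψ : (φ (Multiplicative.ofAdd 1)) ^ (p ^ m) = 1) :
    ∀ b : A, ∀ x : A ⋊[φ] Multiplicative (ZMod (p ^ n)),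
      piMap A (p ^ n) φ k (x * (SemidirectProduct.inl b)⁻¹)
        = piMap A (p ^ n) φ k x * (SemidirectProduct.inl b)⁻¹ := by
  haveI : NeZero (p ^ n) := ⟨pow_ne_zero n hp.pos.ne'⟩
  intro b x
  set ψ := φ (Multiplicative.ofAdd 1) with hψdef
  obtain ⟨a, t⟩ := x
  have hright : (⟨a, t⟩ * (SemidirectProduct.inl b)⁻¹ :
      A ⋊[φ] Multiplicative (ZMod (p ^ n))).right = t := by
    simp
  -- key congruence
  set i := (Multiplicative.toAdd t).val with hi
  have hord : orderOf ψ ∣ p ^ m := orderOf_dvd_of_pow_eq_one hψ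
  have hk1 : k ≡ 1 [MOD p ^ m] := by
    show k % p ^ m = 1 % p ^ m
    rw [hk, Nat.add_mul_mod_self_right]
  have hS : S k i ≡ i [MOD p ^ m] := S_modEq k i _ hk1
  have hval : ((S k i : ZMod (p ^ n))).val ≡ i [MOD p ^ m] := by
    rw [ZMod.val_natCast]
    exact ((Nat.mod_modEq (S k i) (p ^ n)).of_dvd (pow_dvd_pow p hmn)).trans hS
  have hpsi : ψ ^ ((S k i : ZMod (p ^ n))).val = ψ ^ i :=
    (pow_eq_pow_iff_modEq).2 (Nat.ModEq.of_dvd hord hval)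
  have hphi : φ (Multiplicative.ofAdd ((S k i : ZMod (p ^ n)))) = φ t := by
    rw [phi_ofAdd, hpsi, ← phi_ofAdd]
    simp [hi, ZMod.natCast_val, ZMod.cast_id]
  ext
  · simp [piMap, hphi]
    rw [← hi, hphi]
  · simp [piMap, hright]
end

section
/- Let G = A ⋊ ⟨τ⟩ with A abelian and ⟨τ⟩ cyclic of order p^n (p prime), with conjugation action ψ ∈ Aut(A) of order p^y. Suppose θ ∈ Aut(G) satisfies θ(A) = A, θ(τ) = c·τ^t with c ∈ A and t ∈ ℤ, and ψ commutes with θ|_A in Aut(A). Then ψ^{t−1} = Id_A, and in particular t ≡ 1 (mod p^y). -/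
open SemidirectProduct

theorem stmt_17 (p n y : ℕ) (hp : p.Prime)
    (A : Type*) [CommGroup A]
    (φ : Multiplicative (ZMod (p ^ n)) →* MulAut A)
    (hy : orderOf (φ (Multiplicative.ofAdd 1)) = p ^ y)
    (θ : MulAut (A ⋊[φ] Multiplicative (ZMod (p ^ n))))
    (hθA : ∀ g : A ⋊[φ] Multiplicative (ZMod (p ^ n)),
      (∃ a : A, g = SemidirectProduct.inl a) ↔ (∃ a : A, θ g = SemidirectProduct.inl a))
    (hcomm : ∀ a b : A, θ (SemidirectProduct.inl a) = SemidirectProduct.inl b →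
      θ (SemidirectProduct.inl ((φ (Multiplicative.ofAdd 1)) a))
        = SemidirectProduct.inl ((φ (Multiplicative.ofAdd 1)) b))
    (c : A) (t : ℤ)
    (hθτ : θ (SemidirectProduct.inr (Multiplicative.ofAdd 1))
      = SemidirectProduct.inl c * (SemidirectProduct.inr (Multiplicative.ofAdd 1)) ^ t) :
    (φ (Multiplicative.ofAdd 1)) ^ (t - 1) = 1 ∧ t ≡ 1 [ZMOD ((p : ℤ) ^ y)] := by
  set ψ := φ (Multiplicative.ofAdd 1) with hψ
  set τ : Multiplicative (ZMod (p ^ n)) := Multiplicative.ofAdd 1 with hτ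
  have key : ∀ b : A, (ψ ^ t) b = ψ b := by
    intro b
    obtain ⟨a, ha⟩ : ∃ a : A, θ (SemidirectProduct.inl a) = SemidirectProduct.inl b := by
      obtain ⟨a, ha⟩ := (hθA (θ.symm (SemidirectProduct.inl b))).mpr ⟨b, by simp⟩
      exact ⟨a, by rw [← ha]; simp⟩
    have h1 : θ (SemidirectProduct.inl (ψ a)) = SemidirectProduct.inl (ψ b) := hcomm a b ha
    have hτt : ((SemidirectProduct.inr τ : A ⋊[φ] Multiplicative (ZMod (p ^ n))) ^ t)
        = SemidirectProduct.inr (τ ^ t) := (map_zpow SemidirectProduct.inr τ t).symm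
    have h3 : (SemidirectProduct.inr (τ ^ t) : A ⋊[φ] Multiplicative (ZMod (p ^ n)))
        * SemidirectProduct.inl b * SemidirectProduct.inr ((τ ^ t)⁻¹)
        = SemidirectProduct.inl ((ψ ^ t) b) := by
      rw [← SemidirectProduct.inl_aut, map_zpow, hψ]
    have h2 : θ (SemidirectProduct.inl (ψ a)) = SemidirectProduct.inl ((ψ ^ t) b) := by
      rw [hψ, SemidirectProduct.inl_aut, map_mul, map_mul, map_inv, map_inv, hθτ, ha, hτt]
      calc SemidirectProduct.inl c * SemidirectProduct.inr (τ ^ t) * SemidirectProduct.inl b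
            * (SemidirectProduct.inl c * SemidirectProduct.inr (τ ^ t))⁻¹
          = SemidirectProduct.inl c * (SemidirectProduct.inr (τ ^ t) * SemidirectProduct.inl b
            * SemidirectProduct.inr ((τ ^ t)⁻¹)) * (SemidirectProduct.inl c)⁻¹ := by
            rw [map_inv]; group
        _ = SemidirectProduct.inl c * SemidirectProduct.inl ((ψ ^ t) b)
            * (SemidirectProduct.inl c)⁻¹ := by rw [h3]
        _ = SemidirectProduct.inl (c * (ψ ^ t) b * c⁻¹) := by
            rw [← map_inv, ← map_mul, ← map_mul]
        _ = SemidirectProduct.inl ((ψ ^ t) b) := by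
            rw [mul_comm c ((ψ ^ t) b), mul_inv_cancel_right]
    exact (SemidirectProduct.inl_injective (h1.symm.trans h2)).symm
  have hpow : ψ ^ (t - 1) = 1 := by
    have hdecomp : ψ ^ (t - 1) = ψ ^ t * ψ⁻¹ := by
      rw [zpow_sub, zpow_one]
    ext b
    rw [hdecomp]
    simp only [MulAut.mul_apply, MulAut.one_apply]
    calc (ψ ^ t) (ψ⁻¹ b) = ψ (ψ⁻¹ b) := key _
      _ = b := by simp
  refine ⟨hpow, ?_⟩
  have hdvd : ((p : ℤ) ^ y) ∣ t - 1 := by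
    have h := orderOf_dvd_iff_zpow_eq_one.mpr hpow
    rw [hy] at h
    exact_mod_cast h
  exact Int.ModEq.symm ((Int.modEq_iff_dvd).mpr hdvd)
end

section
/- Let G = A ⋊ ⟨τ⟩ with ⟨τ⟩ cyclic of order p^n (p prime), and suppose A has finite exponent coprime to p, the conjugation action ψ of τ on A has order dividing p^m with m ≤ n, and θ ∈ Aut(G) satisfies θ(τ) = c·τ^t with c ∈ A. Then c·ψ^t(c)·ψ^{2t}(c)⋯ψ^{(p^m−1)t}(c) = 1. -/
open SemidirectProduct in
theorem stmt_18 (p m n : ℕ) (hp : p.Prime) (hmn : m ≤ n)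
    (A : Type*) [Group A]
    (hexp : Monoid.exponent A ≠ 0) (hcop : Nat.Coprime (Monoid.exponent A) p)
    (φ : Multiplicative (ZMod (p ^ n)) →* MulAut A)
    (hψ : (φ (Multiplicative.ofAdd 1)) ^ (p ^ m) = 1)
    (θ : MulAut (A ⋊[φ] Multiplicative (ZMod (p ^ n))))
    (c : A) (t : ℤ)
    (hθτ : θ (SemidirectProduct.inr (Multiplicative.ofAdd 1))
      = SemidirectProduct.inl c * (SemidirectProduct.inr (Multiplicative.ofAdd 1)) ^ t) :
    ((List.range (p ^ m)).map (fun j => ((φ (Multiplicative.ofAdd 1)) ^ ((j : ℤ) * t)) c)).prod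
      = 1 := by
  set ψ := φ (Multiplicative.ofAdd 1) with hψdef
  set f : ℕ → A := fun j => (ψ ^ ((j : ℤ) * t)) c with hf
  set τ : Multiplicative (ZMod (p ^ n)) := Multiplicative.ofAdd 1 with hτ
  have hψt : ψ ^ ((p ^ m : ℕ) * t : ℤ) = 1 := by
    rw [zpow_mul, zpow_natCast, hψ, one_zpow]
  have hper : ∀ j, f (j + p ^ m) = f j := by
    intro j
    simp only [hf]
    congr 1
    rw [Nat.cast_add, add_mul, zpow_add, hψt, mul_one]
  have hswap : ∀ (g : Multiplicative (ZMod (p ^ n))) (a : A),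
      (inr g : A ⋊[φ] _) * inl a = inl (φ g a) * inr g := by
    intro g a
    rw [inl_aut, mul_assoc, ← map_mul, inv_mul_cancel, map_one, mul_one]
  have hzp : (inr τ : A ⋊[φ] _) ^ t = inr (τ ^ t) := (map_zpow inr τ t).symm
  have key : ∀ N : ℕ,
      (inl c * inr τ ^ t : A ⋊[φ] _) ^ N
        = inl ((List.range N).map f).prod * inr (τ ^ (t * N)) := by
    intro N
    induction N with
    | zero => simp
    | succ N ih =>
      rw [pow_succ, ih, hzp, List.range_succ, List.map_append, List.prod_append]
      simp only [List.map_cons, List.map_nil, List.prod_cons, List.prod_nil, mul_one]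
      rw [mul_assoc, ← mul_assoc (inr (τ ^ (t * (N : ℤ))) : A ⋊[φ] _), hswap,
        ← mul_assoc, ← mul_assoc, ← map_mul, mul_assoc, ← map_mul, ← zpow_add]
      congr 2
      · rw [map_zpow, mul_comm t (N : ℤ)]
      · push_cast
        ring_nf
  have hτpn : τ ^ (p ^ n) = 1 := by
    rw [hτ, ← ofAdd_nsmul]
    simp
  have h1 : (inl c * inr τ ^ t : A ⋊[φ] _) ^ (p ^ n) = 1 := by
    rw [← hθτ, ← map_pow, ← map_pow, hτpn]
    simp
  have h2 : ((List.range (p ^ n)).map f).prod = 1 := by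
    have h3 := congrArg SemidirectProduct.left ((key (p ^ n)).symm.trans h1)
    have h4 : ∀ k : ℤ, ((inr τ : A ⋊[φ] _) ^ k).left = 1 := by
      intro k; rw [← map_zpow]; rfl
    simpa [SemidirectProduct.mul_left, SemidirectProduct.left_inl,
      SemidirectProduct.left_inr, SemidirectProduct.right_inl, h4] using h3
  have hshift : ∀ K j, f (j + p ^ m * K) = f j := by
    intro K j
    induction K with
    | zero => simp
    | succ K ih2 => rw [Nat.mul_succ, ← add_assoc, hper, ih2]
  have hblocks : ∀ K : ℕ, ((List.range (p ^ m * K)).map f).prod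
      = (((List.range (p ^ m)).map f).prod) ^ K := by
    intro K
    induction K with
    | zero => simp
    | succ K ih =>
      rw [Nat.mul_succ, List.range_add, List.map_append, List.prod_append, ih, pow_succ,
        List.map_map]
      congr 2
      apply List.map_congr_left
      intro j hj
      show f (p ^ m * K + j) = f j
      rw [add_comm]
      exact hshift K j
  set P := ((List.range (p ^ m)).map f).prod with hP
  have hPpow : P ^ (p ^ (n - m)) = 1 := by
    rw [← hblocks, ← pow_add, Nat.add_sub_cancel' hmn, h2]
  have hord : orderOf P ∣ p ^ (n - m) := orderOf_dvd_of_pow_eq_one hPpow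
  have hordexp : orderOf P ∣ Monoid.exponent A := Monoid.order_dvd_exponent P
  have hcop2 : Nat.Coprime (orderOf P) (p ^ (n - m)) :=
    Nat.Coprime.pow_right _ (Nat.Coprime.coprime_dvd_left hordexp hcop)
  have h4 : orderOf P = 1 := Nat.Coprime.eq_one_of_dvd hcop2 hord
  have h5 : P = 1 := orderOf_eq_one_iff.mp h4
  have h6 : ((List.range (p ^ m)).flatMap fun a : ℕ => [(a : ℤ)])
      = (List.range (p ^ m)).map (fun a : ℕ => (a : ℤ)) :=
    List.flatMap_pure_eq_map _ _
  simpa [hP, hf, h6, List.map_map, Function.comp_def] using h5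
end
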